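/- For every nonnegative integer n, the sum over k from 0 to n of L_k^{(alpha)}(x) L_{n-k}^{(-n-alpha-1)}(-y) equals (y-x)^n / n!. -/

import Mathlib

noncomputable def poch (a : ℝ) (k : ℕ) : ℝ := ∏ m ∈ Finset.range k, (a + m)

noncomputable def lag (α : ℝ) (n : ℕ) (x : ℝ) : ℝ :=
  ∑ k ∈ Finset.range (n + 1),
    (-1) ^ k * (poch (α + k + 1) (n - k) / (n - k).factorial) * x ^ k / k.factorial

noncomputable def jacobi (α β : ℝ) (n : ℕ) (x : ℝ) : ℝ :=
  ∑ k ∈ Finset.range (n + 1),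
    poch ((n : ℝ) + α + β + 1) k * poch (α + k + 1) (n - k) /
      (k.factorial * (n - k).factorial) * ((x - 1) / 2) ^ k

noncomputable def charlier (a : ℝ) (n : ℕ) (x : ℝ) : ℝ :=
  ∑ m ∈ Finset.range (n + 1),
    (∏ j ∈ Finset.range m, (x - (j : ℝ))) / m.factorial * (-a) ^ (n - m) / (n - m).factorial
lemma poch_zero (a : ℝ) : poch a 0 = 1 := by simp [poch]

lemma poch_succ (a : ℝ) (k : ℕ) : poch a (k+1) = poch a k * (a + k) :=
  Finset.prod_range_succ _ _

lemma vdm (a b : ℝ) (N : ℕ) :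
    ∑ m ∈ Finset.range (N+1), (N.choose m : ℝ) * (poch a m * poch b (N - m)) =
      poch (a+b) N := by
  induction N with
  | zero => simp [poch]
  | succ N ih =>
    rw [show N + 1 + 1 = N + 2 from rfl,
      Finset.sum_choose_succ_mul (fun i j => poch a i * poch b j) N]
    rw [poch_succ, ← ih, Finset.sum_mul, ← Finset.sum_add_distrib]
    refine Finset.sum_congr rfl fun m hm => ?_
    have hm' : m ≤ N := Nat.lt_succ_iff.mp (Finset.mem_range.mp hm)
    have h1 : N + 1 - m = (N - m) + 1 := by omega
    have hc : ((N - m : ℕ) : ℝ) = (N : ℝ) - m := by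
      push_cast [Nat.cast_sub hm']; ring
    rw [h1, poch_succ, poch_succ, hc]
    ring

lemma vdm' (a b : ℝ) (N : ℕ) :
    ∑ m ∈ Finset.range (N+1),
      poch a m / m.factorial * (poch b (N-m) / (N-m).factorial) =
      poch (a+b) N / N.factorial := by
  rw [← vdm a b N, Finset.sum_div]
  refine Finset.sum_congr rfl fun m hm => ?_
  have hm' : m ≤ N := Nat.lt_succ_iff.mp (Finset.mem_range.mp hm)
  have key : ((N.choose m : ℕ) : ℝ) * m.factorial * (N - m).factorial = N.factorial := by
    rw_mod_cast [Nat.choose_mul_factorial_mul_factorial hm']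
  have h1 : (m.factorial : ℝ) ≠ 0 := Nat.cast_ne_zero.mpr m.factorial_ne_zero
  have h2 : ((N - m).factorial : ℝ) ≠ 0 := Nat.cast_ne_zero.mpr (N - m).factorial_ne_zero
  have h3 : (N.factorial : ℝ) ≠ 0 := Nat.cast_ne_zero.mpr N.factorial_ne_zero
  field_simp
  linear_combination (-1 : ℝ) * poch a m * poch b (N - m) * key

lemma poch_one_sub (N : ℕ) (hN : N ≠ 0) : poch (1 - (N : ℝ)) N = 0 := by
  apply Finset.prod_eq_zero (i := N - 1) (Finset.mem_range.mpr (by omega))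
  have : ((N - 1 : ℕ) : ℝ) = (N : ℝ) - 1 := by
    push_cast [Nat.cast_sub (by omega : 1 ≤ N)]; ring
  rw [this]; ring

lemma tri (M : ℕ) (h : ℕ → ℕ → ℝ) :
    ∑ a ∈ Finset.range (M+1), ∑ b ∈ Finset.range (M+1-a), h a b =
      ∑ b ∈ Finset.range (M+1), ∑ a ∈ Finset.range (M+1-b), h a b := by
  have key : ∀ g : ℕ → ℕ → ℝ, ∀ a : ℕ,
      ∑ b ∈ Finset.range (M+1-a), g a b =
      ∑ b ∈ Finset.range (M+1), if a + b ≤ M then g a b else 0 := by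
    intro g a
    rw [← Finset.sum_filter]
    apply Finset.sum_congr _ (fun _ _ => rfl)
    ext b; simp only [Finset.mem_filter, Finset.mem_range]; omega
  rw [Finset.sum_congr rfl fun a _ => key h a, Finset.sum_comm]
  refine Finset.sum_congr rfl fun b _ => ?_
  rw [key (fun b a => h a b) b]
  exact Finset.sum_congr rfl fun a _ => by rw [add_comm]

lemma triangle (n : ℕ) (t : ℕ → ℕ → ℝ) :
    ∑ k ∈ Finset.range (n+1), ∑ i ∈ Finset.range (k+1), t k i =
      ∑ i ∈ Finset.range (n+1), ∑ m ∈ Finset.range (n+1-i), t (i+m) i := by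
  have key : ∀ k ∈ Finset.range (n+1),
      ∑ i ∈ Finset.range (k+1), t k i =
      ∑ i ∈ Finset.range (n+1), if i ≤ k then t k i else 0 := by
    intro k hk
    rw [← Finset.sum_filter]
    apply Finset.sum_congr _ (fun _ _ => rfl)
    have hk' := Finset.mem_range.mp hk
    ext i; simp only [Finset.mem_filter, Finset.mem_range]; omega
  rw [Finset.sum_congr rfl key, Finset.sum_comm]
  refine Finset.sum_congr rfl fun i hi => ?_
  have hi' := Finset.mem_range.mp hi
  rw [← Finset.sum_filter]
  have : (Finset.range (n+1)).filter (fun k => i ≤ k) = Finset.Ico i (n+1) := by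
    ext k; simp only [Finset.mem_filter, Finset.mem_range, Finset.mem_Ico]; omega
  rw [this, Finset.sum_Ico_eq_sum_range]

noncomputable def Fco (α x : ℝ) (i m : ℕ) : ℝ :=
  (-1) ^ i * (poch (α + i + 1) m / m.factorial) * x ^ i / i.factorial

lemma lag_eq (α x : ℝ) (k : ℕ) :
    lag α k x = ∑ i ∈ Finset.range (k + 1), Fco α x i (k - i) := rfl

theorem stmt16 (α x y : ℝ) (n : ℕ) :
    ∑ k ∈ Finset.range (n + 1), lag α k x * lag (-(n : ℝ) - α - 1) (n - k) (-y) =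
      (y - x) ^ n / n.factorial := by
  set β : ℝ := -(n : ℝ) - α - 1 with hβ
  set F : ℕ → ℕ → ℝ := Fco α x with hF
  set G : ℕ → ℕ → ℝ := Fco β (-y) with hG
  calc ∑ k ∈ Finset.range (n + 1), lag α k x * lag β (n - k) (-y)
      = ∑ k ∈ Finset.range (n+1), ∑ i ∈ Finset.range (k+1),
          ∑ j ∈ Finset.range (n-k+1), F i (k-i) * G j (n-k-j) := by
        refine Finset.sum_congr rfl fun k _ => ?_
        rw [lag_eq, lag_eq, Finset.sum_mul_sum]
    _ = ∑ i ∈ Finset.range (n+1), ∑ m ∈ Finset.range (n+1-i),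
          ∑ j ∈ Finset.range (n-(i+m)+1), F i m * G j (n-(i+m)-j) := by
        rw [triangle n (fun k i => ∑ j ∈ Finset.range (n-k+1), F i (k-i) * G j (n-k-j))]
        exact Finset.sum_congr rfl fun i _ => Finset.sum_congr rfl fun m _ => by
          rw [Nat.add_sub_cancel_left]
    _ = ∑ i ∈ Finset.range (n+1), ∑ j ∈ Finset.range (n+1-i),
          ∑ m ∈ Finset.range (n+1-i-j), F i m * G j (n-i-j-m) := by
        refine Finset.sum_congr rfl fun i hi => ?_
        have hi' : i ≤ n := Nat.lt_succ_iff.mp (Finset.mem_range.mp hi)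
        have h1 : ∑ m ∈ Finset.range (n+1-i), ∑ j ∈ Finset.range (n-(i+m)+1),
            F i m * G j (n-(i+m)-j) =
            ∑ m ∈ Finset.range ((n-i)+1), ∑ j ∈ Finset.range ((n-i)+1-m),
            F i m * G j ((n-i)-m-j) := by
          rw [show n+1-i = (n-i)+1 by omega]
          refine Finset.sum_congr rfl fun m hm => ?_
          have hm' : m ≤ n - i := Nat.lt_succ_iff.mp (Finset.mem_range.mp hm)
          rw [show n-(i+m)+1 = (n-i)+1-m by omega]
          exact Finset.sum_congr rfl fun j _ => by rw [show n-(i+m)-j = (n-i)-m-j by omega]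
        rw [h1, tri (n-i) (fun m j => F i m * G j ((n-i)-m-j)),
          show (n-i)+1 = n+1-i by omega]
        refine Finset.sum_congr rfl fun j hj => ?_
        have hj' : j ≤ n - i := by
          have := Finset.mem_range.mp hj; omega
        exact Finset.sum_congr rfl fun m _ => by rw [show n-i-m-j = n-i-j-m by omega]
    _ = ∑ i ∈ Finset.range (n+1), ∑ j ∈ Finset.range (n+1-i),
          ((-1)^i * x^i / i.factorial) * ((-1)^j * (-y)^j / j.factorial) *
            (poch ((i:ℝ)+(j:ℝ)+1-(n:ℝ)) (n-i-j) / (n-i-j).factorial) := by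
        refine Finset.sum_congr rfl fun i hi => Finset.sum_congr rfl fun j hj => ?_
        have hi' : i ≤ n := Nat.lt_succ_iff.mp (Finset.mem_range.mp hi)
        have hj' : j ≤ n - i := by have := Finset.mem_range.mp hj; omega
        rw [show n+1-i-j = (n-i-j)+1 by omega]
        have expand : ∀ m, F i m * G j (n-i-j-m) =
            ((-1)^i * x^i / i.factorial) * ((-1)^j * (-y)^j / j.factorial) *
              (poch (α+i+1) m / m.factorial *
                (poch (β+j+1) ((n-i-j)-m) / ((n-i-j)-m).factorial)) := by
          intro m
          simp only [hF, hG, Fco]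
          ring
        rw [Finset.sum_congr rfl fun m _ => expand m, ← Finset.mul_sum,
          vdm' (α+i+1) (β+j+1) (n-i-j)]
        rw [show α+i+1 + (β+j+1) = (i:ℝ)+(j:ℝ)+1-(n:ℝ) by rw [hβ]; ring]
    _ = ∑ i ∈ Finset.range (n+1),
          ((-1)^i * x^i / i.factorial) * ((-1)^(n-i) * (-y)^(n-i) / (n-i).factorial) := by
        refine Finset.sum_congr rfl fun i hi => ?_
        have hi' : i ≤ n := Nat.lt_succ_iff.mp (Finset.mem_range.mp hi)
        rw [show n+1-i = (n-i)+1 by omega]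
        rw [Finset.sum_eq_single_of_mem (n-i) (Finset.mem_range.mpr (by omega))]
        · rw [show n-i-(n-i) = 0 by omega, poch_zero]
          have : ((n:ℝ)-(i:ℝ)) = ((n-i : ℕ) : ℝ) := by push_cast [Nat.cast_sub hi']; ring
          simp
        · intro j hj hne
          have hj' : j < n - i := by
            have := Finset.mem_range.mp hj; omega
          have hN : n - i - j ≠ 0 := by omega
          have hcast : (i:ℝ)+(j:ℝ)+1-(n:ℝ) = 1 - ((n-i-j : ℕ) : ℝ) := by
            push_cast [Nat.cast_sub (show i + j ≤ n by omega), Nat.sub_sub]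
            ring
          rw [hcast, poch_one_sub _ hN]
          simp
    _ = (y - x) ^ n / n.factorial := by
        rw [show y - x = -x + y by ring, add_pow, Finset.sum_div]
        refine Finset.sum_congr rfl fun i hi => ?_
        have hi' : i ≤ n := Nat.lt_succ_iff.mp (Finset.mem_range.mp hi)
        have key : ((n.choose i : ℕ) : ℝ) * i.factorial * (n - i).factorial = n.factorial := by
          rw_mod_cast [Nat.choose_mul_factorial_mul_factorial hi']
        have h1 : (i.factorial : ℝ) ≠ 0 := Nat.cast_ne_zero.mpr i.factorial_ne_zero
        have h2 : ((n - i).factorial : ℝ) ≠ 0 := Nat.cast_ne_zero.mpr (n - i).factorial_ne_zero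
        have h3 : (n.factorial : ℝ) ≠ 0 := Nat.cast_ne_zero.mpr n.factorial_ne_zero
        have hy : (-1 : ℝ)^(n-i) * (-y)^(n-i) = y^(n-i) := by
          rw [← mul_pow]; ring_nf
        have hx : (-1 : ℝ)^i * x^i = (-x)^i := by rw [← mul_pow]; ring_nf
        rw [div_mul_div_comm, hx, hy]  -- shape guess, may fail
        field_simp
        linear_combination (-1:ℝ) * (-1)^i * x^i * y^(n-i) * key
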